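/- Let (X,d) be a complete metric space and for each i ∈ ℕ let 𝓕_i = {f_{1,i},…,f_{n_i,i}} be a finite family of Lipschitz maps on X, with Hutchinson operators F_i(A) = ⋃_{r=1}^{n_i} f_{r,i}(A) acting on the space H(X) of nonempty compact subsets of X with the Hausdorff metric h. Let L_i = max_{1≤r≤n_i} Lip(f_{r,i}). If lim_{k→∞} ∏_{i=1}^k L_i = 0, then for all nonempty compact sets A, B ⊆ X, h(Φ_k(A), Φ_k(B)) → 0 and h(Ψ_k(A), Ψ_k(B)) → 0 as k → ∞, where Φ_k = F_k ∘ F_{k−1} ∘ ⋯ ∘ F_1 and Ψ_k = F_1 ∘ F_2 ∘ ⋯ ∘ F_k. -/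

import Mathlib

open Filter Topology TopologicalSpace

/-- The forward trajectory maps `Φ_k = F_k ∘ F_{k-1} ∘ ⋯ ∘ F₁` (with `0`-based indexing). -/
def forwardTraj {α : Type*} (T : ℕ → α → α) : ℕ → α → α
  | 0 => id
  | k + 1 => T k ∘ forwardTraj T k

/-- The backward trajectory maps `Ψ_k = F₁ ∘ F₂ ∘ ⋯ ∘ F_k` (with `0`-based indexing). -/
def backwardTraj {α : Type*} (T : ℕ → α → α) : ℕ → α → α
  | 0 => id
  | k + 1 => backwardTraj T k ∘ T k

open EMetric Metric in
lemma hutchinson_edist_le {X : Type*} [MetricSpace X]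
    {n : ℕ} (hn : 0 < n) {f : Fin n → X → X} {L : NNReal}
    (hf : ∀ r, LipschitzWith L (f r))
    (A B : NonemptyCompacts X)
    {FA FB : NonemptyCompacts X}
    (hFA : (FA : Set X) = ⋃ r, f r '' (A : Set X))
    (hFB : (FB : Set X) = ⋃ r, f r '' (B : Set X)) :
    edist FA FB ≤ (L : ENNReal) * edist A B := by
  have key : ∀ (S T : NonemptyCompacts X) (x : X), x ∈ ⋃ r, f r '' (S : Set X) →
      ∃ y ∈ ⋃ r, f r '' (T : Set X), edist x y ≤ (L : ENNReal) * hausdorffEDist (S : Set X) T := by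
    intro S T x hx
    obtain ⟨r, a, ha, rfl⟩ := by simpa using hx
    obtain ⟨b, hb, hab⟩ := T.isCompact.exists_infEdist_eq_edist T.nonempty a
    refine ⟨f r b, Set.mem_iUnion.2 ⟨r, Set.mem_image_of_mem _ hb⟩, ?_⟩
    calc edist (f r a) (f r b) ≤ L * edist a b := hf r a b
      _ = L * infEDist a (T : Set X) := by rw [hab]
      _ ≤ L * hausdorffEDist (S : Set X) T :=
          mul_le_mul_right (infEdist_le_hausdorffEdist_of_mem ha) _
  show hausdorffEDist (FA : Set X) (FB : Set X) ≤ (L : ENNReal) * hausdorffEDist (A : Set X) B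
  rw [hFA, hFB]
  refine hausdorffEdist_le_of_mem_edist (fun x hx => key A B x hx) (fun x hx => ?_)
  obtain ⟨y, hy, hxy⟩ := key B A x hx
  exact ⟨y, hy, by rwa [hausdorffEdist_comm (s := (A : Set X)) (t := (B : Set X))]⟩

/-- (Corollary `IFSequiv`, asymptotic similarity of SFS trajectories): for a sequence of
function systems `𝓕ᵢ = {f_{1,i},…,f_{nᵢ,i}}` of Lipschitz maps with Hutchinson operators
`Fᵢ` and contraction factors `Lᵢ` satisfying `∏_{i=1}^k Lᵢ → 0`, all forward SFS
trajectories are asymptotically similar in the Hausdorff metric, and likewise all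
backward SFS trajectories. -/
theorem SFS_trajectories_asymptotically_similar
    {X : Type*} [MetricSpace X] [CompleteSpace X]
    (n : ℕ → ℕ) (hn : ∀ i, 0 < n i)
    (f : (i : ℕ) → Fin (n i) → X → X) (L : ℕ → NNReal)
    (hf : ∀ i r, LipschitzWith (L i) (f i r))
    (F : ℕ → NonemptyCompacts X → NonemptyCompacts X)
    (hF : ∀ i (B : NonemptyCompacts X), (F i B : Set X) = ⋃ r, f i r '' (B : Set X))
    (hL : Tendsto (fun k => ∏ i ∈ Finset.range k, (L i : ℝ)) atTop (𝓝 0)) :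
    ∀ A B : NonemptyCompacts X,
      Tendsto (fun k => dist (forwardTraj F k A) (forwardTraj F k B)) atTop (𝓝 0) ∧
      Tendsto (fun k => dist (backwardTraj F k A) (backwardTraj F k B)) atTop (𝓝 0) := by
  have step : ∀ i (A B : NonemptyCompacts X),
      edist (F i A) (F i B) ≤ (L i : ENNReal) * edist A B := fun i A B =>
    hutchinson_edist_le (hn i) (hf i) A B (hF i A) (hF i B)
  have fwd : ∀ (A B : NonemptyCompacts X) k,
      edist (forwardTraj F k A) (forwardTraj F k B) ≤
        (∏ i ∈ Finset.range k, (L i : ENNReal)) * edist A B := by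
    intro A B k
    induction k with
    | zero => simp [forwardTraj]
    | succ k ih =>
      calc edist (forwardTraj F (k+1) A) (forwardTraj F (k+1) B)
          ≤ (L k : ENNReal) * edist (forwardTraj F k A) (forwardTraj F k B) := step k _ _
        _ ≤ (L k : ENNReal) * ((∏ i ∈ Finset.range k, (L i : ENNReal)) * edist A B) :=
            mul_le_mul_right ih _
        _ = (∏ i ∈ Finset.range (k+1), (L i : ENNReal)) * edist A B := by
            rw [Finset.prod_range_succ]; ring
  have bwd : ∀ k (A B : NonemptyCompacts X),
      edist (backwardTraj F k A) (backwardTraj F k B) ≤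
        (∏ i ∈ Finset.range k, (L i : ENNReal)) * edist A B := by
    intro k
    induction k with
    | zero => intro A B; simp [backwardTraj]
    | succ k ih =>
      intro A B
      calc edist (backwardTraj F (k+1) A) (backwardTraj F (k+1) B)
          = edist (backwardTraj F k (F k A)) (backwardTraj F k (F k B)) := rfl
        _ ≤ (∏ i ∈ Finset.range k, (L i : ENNReal)) * edist (F k A) (F k B) := ih _ _
        _ ≤ (∏ i ∈ Finset.range k, (L i : ENNReal)) * ((L k : ENNReal) * edist A B) :=
            mul_le_mul_right (step k A B) _
        _ = (∏ i ∈ Finset.range (k+1), (L i : ENNReal)) * edist A B := by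
            rw [Finset.prod_range_succ]; ring
  intro A B
  have to_dist : ∀ (C D : NonemptyCompacts X) k,
      edist C D ≤ (∏ i ∈ Finset.range k, (L i : ENNReal)) * edist A B →
      dist C D ≤ (∏ i ∈ Finset.range k, (L i : ℝ)) * dist A B := by
    intro C D k h
    have hfin : (∏ i ∈ Finset.range k, (L i : ENNReal)) * edist A B ≠ ⊤ := by
      exact ENNReal.mul_ne_top (by simp [ENNReal.prod_ne_top]) (edist_ne_top A B)
    have := ENNReal.toReal_mono hfin h
    rw [dist_edist, dist_edist]
    convert this using 2
    rw [ENNReal.toReal_mul]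
    congr 1
    rw [ENNReal.toReal_prod]
    simp
  have sq : ∀ (g : ℕ → ℝ),
      (∀ k, 0 ≤ g k) → (∀ k, g k ≤ (∏ i ∈ Finset.range k, (L i : ℝ)) * dist A B) →
      Tendsto g atTop (𝓝 0) := by
    intro g h0 hle
    have : Tendsto (fun k => (∏ i ∈ Finset.range k, (L i : ℝ)) * dist A B) atTop (𝓝 0) := by
      simpa using hL.mul_const (dist A B)
    exact squeeze_zero h0 hle this
  exact ⟨sq _ (fun k => dist_nonneg) (fun k => to_dist _ _ k (fwd A B k)),
    sq _ (fun k => dist_nonneg) (fun k => to_dist _ _ k (bwd k A B))⟩
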